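/- Let (a₁, …, aₙ) be an n-tuple of real symmetric 3×3 matrices. Then the family is orthotropic — i.e. there exists g ∈ SO(3) such that gᵀ·aₖ·g is diagonal for every k, but there is no unit vector n ∈ ℝ³ such that every g ∈ SO(3) with g·n = n fixes every aₖ — if and only if aₖ·aₗ = aₗ·aₖ for all indices k, l (equivalently tr(aₖ × aₗ) = 0 for all k, l), and in addition either there exists an index j and x ∈ ℝ³ with det(x, aⱼ·x, aⱼ²·x) ≠ 0 (some aⱼ × aⱼ² ≠ 0), or there exist indices i, j and x ∈ ℝ³ with det(x, aᵢ·x, aⱼ·x) ≠ 0 (some aᵢ × aⱼ ≠ 0). -/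

import Mathlib

open Matrix


/-- The rotation group `SO(3)` as a set of real `3 × 3` matrices. -/
def SO3 : Set (Matrix (Fin 3) (Fin 3) ℝ) := {g | g * gᵀ = 1 ∧ g.det = 1}

/-- Determinant of the `3 × 3` matrix with columns `u`, `v`, `w`. -/
def det3 (u v w : Fin 3 → ℝ) : ℝ := (Matrix.of fun i j => ![u, v, w] j i).det

lemma det3_eq (u v w : Fin 3 → ℝ) :
    det3 u v w = u 0 * (v 1 * w 2 - v 2 * w 1) - v 0 * (u 1 * w 2 - u 2 * w 1)
      + w 0 * (u 1 * v 2 - u 2 * v 1) := by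
  simp [det3, Matrix.det_fin_three]; ring

lemma so3_transpose_mul {g : Matrix (Fin 3) (Fin 3) ℝ} (hg : g ∈ SO3) : gᵀ * g = 1 :=
  mul_eq_one_comm.mp hg.1

lemma so3_one_mem : (1 : Matrix (Fin 3) (Fin 3) ℝ) ∈ SO3 := by
  constructor <;> simp [SO3]

lemma so3_mul_mem {g h : Matrix (Fin 3) (Fin 3) ℝ} (hg : g ∈ SO3) (hh : h ∈ SO3) :
    g * h ∈ SO3 := by
  refine ⟨?_, by simp [Matrix.det_mul, hg.2, hh.2]⟩
  rw [Matrix.transpose_mul, ← Matrix.mul_assoc, Matrix.mul_assoc g h, hh.1, Matrix.mul_one, hg.1]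


lemma exists_so3_diag (A : Matrix (Fin 3) (Fin 3) ℝ) (hA : Aᵀ = A) :
    ∃ h ∈ SO3, (hᵀ * A * h).IsDiag := by
  have hherm : A.IsHermitian := by
    rwa [Matrix.IsHermitian, Matrix.conjTranspose_eq_transpose_of_trivial]
  set U : Matrix (Fin 3) (Fin 3) ℝ := (hherm.eigenvectorUnitary : Matrix (Fin 3) (Fin 3) ℝ)
  have hU : U * Uᵀ = 1 := by
    have := (Matrix.mem_unitaryGroup_iff).mp hherm.eigenvectorUnitary.2
    rwa [Matrix.star_eq_conjTranspose, Matrix.conjTranspose_eq_transpose_of_trivial] at this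
  have hspec : A = U * Matrix.diagonal hherm.eigenvalues * Uᵀ := by
    have := hherm.spectral_theorem
    rwa [Unitary.conjStarAlgAut_apply, Matrix.star_eq_conjTranspose, Matrix.conjTranspose_eq_transpose_of_trivial,
      show (RCLike.ofReal ∘ hherm.eigenvalues : Fin 3 → ℝ) = hherm.eigenvalues from rfl] at this
  have hUtU : Uᵀ * U = 1 := mul_eq_one_comm.mp hU
  have hdiagU : Uᵀ * A * U = Matrix.diagonal hherm.eigenvalues := by
    conv_lhs => rw [hspec]
    simp only [← Matrix.mul_assoc]
    rw [hUtU, Matrix.one_mul, Matrix.mul_assoc, hUtU, Matrix.mul_one]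
  have hdet2 : U.det * U.det = 1 := by
    have := congrArg Matrix.det hU
    rwa [Matrix.det_mul, Matrix.det_transpose, Matrix.det_one] at this
  rcases mul_self_eq_one_iff.mp hdet2 with hd | hd
  · exact ⟨U, ⟨hU, hd⟩, by rw [hdiagU]; exact Matrix.isDiag_diagonal _⟩
  · set F : Matrix (Fin 3) (Fin 3) ℝ := Matrix.diagonal ![-1, 1, 1]
    have hFF : F * F = 1 := by
      simp [F, Matrix.diagonal_mul_diagonal]
      rw [show (fun i => ![(-1:ℝ), 1, 1] i * ![-1, 1, 1] i) = fun _ => 1 by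
        funext i; fin_cases i <;> norm_num, Pi.one_def]
    have hFt : Fᵀ = F := Matrix.diagonal_transpose _
    have hFdet : F.det = -1 := by simp [F, Matrix.det_diagonal, Fin.prod_univ_three]
    refine ⟨U * F, ⟨?_, by simp [Matrix.det_mul, hd, hFdet]⟩, ?_⟩
    · rw [Matrix.transpose_mul, hFt, ← Matrix.mul_assoc, Matrix.mul_assoc U F F, hFF,
        Matrix.mul_one, hU]
    · rw [Matrix.transpose_mul, hFt]
      have : F * Uᵀ * A * (U * F) = F * (Uᵀ * A * U) * F := by
        simp [Matrix.mul_assoc]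
      rw [this, hdiagU]
      intro i j hij
      simp [F, Matrix.mul_apply, Matrix.diagonal_apply, Finset.sum_ite_eq, hij]


lemma givens_scalar (p q r : ℝ) :
    ∃ cθ sθ : ℝ, cθ ^ 2 + sθ ^ 2 = 1 ∧ (r - p) * cθ * sθ + q * (cθ ^ 2 - sθ ^ 2) = 0 := by
  by_cases hq : q = 0
  · exact ⟨1, 0, by norm_num, by simp [hq]⟩
  · set Δ : ℝ := (p - r) ^ 2 + 4 * q ^ 2 with hΔ
    have hΔpos : 0 ≤ Δ := by positivity
    set lam : ℝ := ((p + r) + Real.sqrt Δ) / 2 with hlam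
    have hsq : Real.sqrt Δ ^ 2 = Δ := Real.sq_sqrt hΔpos
    have hchar : (lam - p) * (lam - r) = q ^ 2 := by
      rw [hlam]; linear_combination (1/4 : ℝ) * hsq
    set N : ℝ := Real.sqrt (q ^ 2 + (lam - p) ^ 2) with hN
    have hNpos : 0 < N := by
      apply Real.sqrt_pos.mpr
      have : 0 < q ^ 2 := by positivity
      nlinarith [sq_nonneg (lam - p)]
    have hNsq : N ^ 2 = q ^ 2 + (lam - p) ^ 2 := Real.sq_sqrt (by positivity)
    refine ⟨q / N, (lam - p) / N, ?_, ?_⟩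
    · field_simp
      linarith [hNsq]
    · have hN2 : N ^ 2 ≠ 0 := by positivity
      have hsq' : Real.sqrt Δ ^ 2 = (p - r) ^ 2 + 4 * q ^ 2 := by rw [hsq]
      field_simp
      linear_combination (-q / 4) * hsq'

lemma mul3_apply (A B C : Matrix (Fin 3) (Fin 3) ℝ) (i j : Fin 3) :
    (A * B * C) i j =
      A i 0 * B 0 0 * C 0 j + A i 0 * B 0 1 * C 1 j + A i 0 * B 0 2 * C 2 j
      + A i 1 * B 1 0 * C 0 j + A i 1 * B 1 1 * C 1 j + A i 1 * B 1 2 * C 2 j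
      + A i 2 * B 2 0 * C 0 j + A i 2 * B 2 1 * C 1 j + A i 2 * B 2 2 * C 2 j := by
  simp [Matrix.mul_apply, Fin.sum_univ_three]; ring

lemma transpose_entry (c : Matrix (Fin 3) (Fin 3) ℝ) (hc : cᵀ = c) (i j : Fin 3) :
    c i j = c j i := by
  have h' := congrFun (congrFun hc i) j
  rw [Matrix.transpose_apply] at h'
  exact h'.symm

lemma block01 (c : Matrix (Fin 3) (Fin 3) ℝ) (hc : cᵀ = c)
    (h02 : c 0 2 = 0) (h12 : c 1 2 = 0) :
    ∃ h ∈ SO3, (hᵀ * c * h).IsDiag ∧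
      ∀ d : Matrix (Fin 3) (Fin 3) ℝ, d.IsDiag → d 0 0 = d 1 1 → hᵀ * d * h = d := by
  obtain ⟨ct, st, pyth, giv⟩ := givens_scalar (c 0 0) (c 0 1) (c 1 1)
  have pn : ∀ z : ℝ, ct ^ 2 * z + st ^ 2 * z = z := fun z => by
    have : (ct ^ 2 + st ^ 2) * z = 1 * z := by rw [pyth]
    linarith [this]
  have hc10 : c 1 0 = c 0 1 := transpose_entry c hc 1 0
  have hc20 : c 2 0 = 0 := by rw [transpose_entry c hc 2 0]; exact h02
  have hc21 : c 2 1 = 0 := by rw [transpose_entry c hc 2 1]; exact h12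
  have ht : (!![ct, -st, 0; st, ct, 0; 0, 0, 1])ᵀ = !![ct, st, 0; -st, ct, 0; 0, 0, 1] := by
    ext i j; fin_cases i <;> fin_cases j <;> rfl
  refine ⟨!![ct, -st, 0; st, ct, 0; 0, 0, 1], ⟨?_, ?_⟩, ?_, ?_⟩
  · rw [ht]
    ext i j
    fin_cases i <;> fin_cases j <;>
      simp [Matrix.mul_apply, Fin.sum_univ_three, Matrix.one_apply, Fin.ext_iff, Matrix.vecHead, Matrix.vecTail] <;>
      linarith [pyth]
  · rw [Matrix.det_fin_three]
    simp
    linarith [pyth]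
  · rw [ht]
    intro i j hij
    fin_cases i <;> fin_cases j <;>
      first
      | exact absurd rfl hij
      | ((rw [mul3_apply]
          simp [h02, h12, hc20, hc21, hc10, Matrix.vecHead, Matrix.vecTail]) <;>
         linarith [pyth, giv, pn (c 0 0), pn (c 1 1)])
  · intro d hd heq
    have d01 : d 0 1 = 0 := hd (by decide)
    have d02 : d 0 2 = 0 := hd (by decide)
    have d10 : d 1 0 = 0 := hd (by decide)
    have d12 : d 1 2 = 0 := hd (by decide)
    have d20 : d 2 0 = 0 := hd (by decide)
    have d21 : d 2 1 = 0 := hd (by decide)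
    rw [ht]
    ext i j
    fin_cases i <;> fin_cases j <;>
      (rw [mul3_apply]
       simp [d01, d02, d10, d12, d20, d21, heq, Matrix.vecHead, Matrix.vecTail]) <;>
      linarith [pn (d 1 1), pn (d 2 2), pn (d 0 0)]

lemma block02 (c : Matrix (Fin 3) (Fin 3) ℝ) (hc : cᵀ = c)
    (h01 : c 0 1 = 0) (h12 : c 1 2 = 0) :
    ∃ h ∈ SO3, (hᵀ * c * h).IsDiag ∧
      ∀ d : Matrix (Fin 3) (Fin 3) ℝ, d.IsDiag → d 0 0 = d 2 2 → hᵀ * d * h = d := by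
  obtain ⟨ct, st, pyth, giv⟩ := givens_scalar (c 0 0) (c 0 2) (c 2 2)
  have pn : ∀ z : ℝ, ct ^ 2 * z + st ^ 2 * z = z := fun z => by
    have : (ct ^ 2 + st ^ 2) * z = 1 * z := by rw [pyth]
    linarith [this]
  have hc20 : c 2 0 = c 0 2 := transpose_entry c hc 2 0
  have hc10 : c 1 0 = 0 := by rw [transpose_entry c hc 1 0]; exact h01
  have hc21 : c 2 1 = 0 := by rw [transpose_entry c hc 2 1]; exact h12
  have ht : (!![ct, 0, -st; 0, 1, 0; st, 0, ct])ᵀ = !![ct, 0, st; 0, 1, 0; -st, 0, ct] := by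
    ext i j; fin_cases i <;> fin_cases j <;> rfl
  refine ⟨!![ct, 0, -st; 0, 1, 0; st, 0, ct], ⟨?_, ?_⟩, ?_, ?_⟩
  · rw [ht]
    ext i j
    fin_cases i <;> fin_cases j <;>
      simp [Matrix.mul_apply, Fin.sum_univ_three, Matrix.one_apply, Fin.ext_iff, Matrix.vecHead, Matrix.vecTail] <;>
      linarith [pyth]
  · rw [Matrix.det_fin_three]
    simp
    linarith [pyth]
  · rw [ht]
    intro i j hij
    fin_cases i <;> fin_cases j <;>
      first
      | exact absurd rfl hij
      | ((rw [mul3_apply]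
          simp [h01, h12, hc10, hc21, hc20, Matrix.vecHead, Matrix.vecTail]) <;>
         linarith [pyth, giv, pn (c 0 0), pn (c 2 2)])
  · intro d hd heq
    have d01 : d 0 1 = 0 := hd (by decide)
    have d02 : d 0 2 = 0 := hd (by decide)
    have d10 : d 1 0 = 0 := hd (by decide)
    have d12 : d 1 2 = 0 := hd (by decide)
    have d20 : d 2 0 = 0 := hd (by decide)
    have d21 : d 2 1 = 0 := hd (by decide)
    rw [ht]
    ext i j
    fin_cases i <;> fin_cases j <;>
      (rw [mul3_apply]
       simp [d01, d02, d10, d12, d20, d21, heq, Matrix.vecHead, Matrix.vecTail]) <;>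
      linarith [pn (d 1 1), pn (d 2 2), pn (d 0 0)]

lemma block12 (c : Matrix (Fin 3) (Fin 3) ℝ) (hc : cᵀ = c)
    (h01 : c 0 1 = 0) (h02 : c 0 2 = 0) :
    ∃ h ∈ SO3, (hᵀ * c * h).IsDiag ∧
      ∀ d : Matrix (Fin 3) (Fin 3) ℝ, d.IsDiag → d 1 1 = d 2 2 → hᵀ * d * h = d := by
  obtain ⟨ct, st, pyth, giv⟩ := givens_scalar (c 1 1) (c 1 2) (c 2 2)
  have pn : ∀ z : ℝ, ct ^ 2 * z + st ^ 2 * z = z := fun z => by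
    have : (ct ^ 2 + st ^ 2) * z = 1 * z := by rw [pyth]
    linarith [this]
  have hc21 : c 2 1 = c 1 2 := transpose_entry c hc 2 1
  have hc10 : c 1 0 = 0 := by rw [transpose_entry c hc 1 0]; exact h01
  have hc20 : c 2 0 = 0 := by rw [transpose_entry c hc 2 0]; exact h02
  have ht : (!![1, 0, 0; 0, ct, -st; 0, st, ct])ᵀ = !![1, 0, 0; 0, ct, st; 0, -st, ct] := by
    ext i j; fin_cases i <;> fin_cases j <;> rfl
  refine ⟨!![1, 0, 0; 0, ct, -st; 0, st, ct], ⟨?_, ?_⟩, ?_, ?_⟩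
  · rw [ht]
    ext i j
    fin_cases i <;> fin_cases j <;>
      simp [Matrix.mul_apply, Fin.sum_univ_three, Matrix.one_apply, Fin.ext_iff, Matrix.vecHead, Matrix.vecTail] <;>
      linarith [pyth]
  · rw [Matrix.det_fin_three]
    simp
    linarith [pyth]
  · rw [ht]
    intro i j hij
    fin_cases i <;> fin_cases j <;>
      first
      | exact absurd rfl hij
      | ((rw [mul3_apply]
          simp [h01, h02, hc10, hc20, hc21, Matrix.vecHead, Matrix.vecTail]) <;>
         linarith [pyth, giv, pn (c 1 1), pn (c 2 2)])
  · intro d hd heq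
    have d01 : d 0 1 = 0 := hd (by decide)
    have d02 : d 0 2 = 0 := hd (by decide)
    have d10 : d 1 0 = 0 := hd (by decide)
    have d12 : d 1 2 = 0 := hd (by decide)
    have d20 : d 2 0 = 0 := hd (by decide)
    have d21 : d 2 1 = 0 := hd (by decide)
    rw [ht]
    ext i j
    fin_cases i <;> fin_cases j <;>
      (rw [mul3_apply]
       simp [d01, d02, d10, d12, d20, d21, heq, Matrix.vecHead, Matrix.vecTail]) <;>
      linarith [pn (d 1 1), pn (d 2 2), pn (d 0 0)]

lemma mul_isDiag_apply (A D : Matrix (Fin 3) (Fin 3) ℝ) (hD : D.IsDiag) (i j : Fin 3) :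
    (A * D) i j = A i j * D j j := by
  rw [Matrix.mul_apply]
  apply Finset.sum_eq_single
  · intro b _ hb
    rw [hD hb, mul_zero]
  · intro hj; exact absurd (Finset.mem_univ j) hj

lemma isDiag_mul_apply (A D : Matrix (Fin 3) (Fin 3) ℝ) (hD : D.IsDiag) (i j : Fin 3) :
    (D * A) i j = D i i * A i j := by
  rw [Matrix.mul_apply]
  apply Finset.sum_eq_single
  · intro b _ hb
    rw [hD (Ne.symm hb), zero_mul]
  · intro hj; exact absurd (Finset.mem_univ i) hj

lemma refine_step (m : ℕ) (d : Fin m → Matrix (Fin 3) (Fin 3) ℝ)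
    (hd : ∀ k, (d k).IsDiag) (c : Matrix (Fin 3) (Fin 3) ℝ) (hc : cᵀ = c)
    (hcomm : ∀ k, c * d k = d k * c) :
    ∃ h ∈ SO3, (hᵀ * c * h).IsDiag ∧ ∀ k, hᵀ * d k * h = d k := by
  have sep : ∀ (i j : Fin 3) (k : Fin m), d k i i ≠ d k j j → c i j = 0 := by
    intro i j k hne
    have h1 := congrFun (congrFun (hcomm k) i) j
    rw [mul_isDiag_apply c (d k) (hd k) i j, isDiag_mul_apply c (d k) (hd k) i j] at h1
    by_contra hc0
    apply hne
    have h2 : (d k j j - d k i i) * c i j = 0 := by linear_combination h1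
    rcases mul_eq_zero.mp h2 with h | h
    · linarith
    · exact absurd h hc0
  by_cases h01 : ∀ k, d k 0 0 = d k 1 1
  · by_cases h02 : ∀ k, d k 0 0 = d k 2 2
    · -- all scalar
      obtain ⟨h, hh, hdiag⟩ := exists_so3_diag c hc
      refine ⟨h, hh, hdiag, fun k => ?_⟩
      have hscal : d k = (d k 0 0) • (1 : Matrix (Fin 3) (Fin 3) ℝ) := by
        ext i j
        rw [Matrix.smul_apply, Matrix.one_apply]
        by_cases hij : i = j
        · subst hij
          rw [if_pos rfl, smul_eq_mul, mul_one]
          fin_cases i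
          · rfl
          · exact (h01 k).symm
          · exact (h02 k).symm
        · rw [if_neg hij, smul_zero, hd k hij]
      rw [hscal]
      rw [Matrix.mul_smul, Matrix.smul_mul, Matrix.mul_one, so3_transpose_mul hh]
    · push_neg at h02
      obtain ⟨k2, hk2⟩ := h02
      have c02 : c 0 2 = 0 := sep 0 2 k2 hk2
      have c12 : c 1 2 = 0 := sep 1 2 k2 (by rw [← h01 k2]; exact hk2)
      obtain ⟨h, hh, hdiag, hpres⟩ := block01 c hc c02 c12
      exact ⟨h, hh, hdiag, fun k => hpres (d k) (hd k) (h01 k)⟩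
  · push_neg at h01
    obtain ⟨k1, hk1⟩ := h01
    by_cases h02 : ∀ k, d k 0 0 = d k 2 2
    · have c01 : c 0 1 = 0 := sep 0 1 k1 hk1
      have c12 : c 1 2 = 0 := sep 1 2 k1 (by rw [← h02 k1]; exact (Ne.symm hk1))
      obtain ⟨h, hh, hdiag, hpres⟩ := block02 c hc c01 c12
      exact ⟨h, hh, hdiag, fun k => hpres (d k) (hd k) (h02 k)⟩
    · push_neg at h02
      obtain ⟨k2, hk2⟩ := h02
      by_cases h12 : ∀ k, d k 1 1 = d k 2 2
      · have c01 : c 0 1 = 0 := sep 0 1 k1 hk1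
        have c02 : c 0 2 = 0 := sep 0 2 k2 hk2
        obtain ⟨h, hh, hdiag, hpres⟩ := block12 c hc c01 c02
        exact ⟨h, hh, hdiag, fun k => hpres (d k) (hd k) (h12 k)⟩
      · push_neg at h12
        obtain ⟨k3, hk3⟩ := h12
        have c01 : c 0 1 = 0 := sep 0 1 k1 hk1
        have c02 : c 0 2 = 0 := sep 0 2 k2 hk2
        have c12 : c 1 2 = 0 := sep 1 2 k3 hk3
        refine ⟨1, so3_one_mem, ?_, fun k => by simp⟩
        have hcd : c.IsDiag := by
          intro i j hij
          fin_cases i <;> fin_cases j <;>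
            first
            | exact absurd rfl hij
            | assumption
            | (rw [transpose_entry c hc]; assumption)
        simpa using hcd

lemma sim_diag (m : ℕ) (a : Fin m → Matrix (Fin 3) (Fin 3) ℝ)
    (ha : ∀ k, (a k)ᵀ = a k) (hcomm : ∀ k l, a k * a l = a l * a k) :
    ∃ g ∈ SO3, ∀ k, (gᵀ * a k * g).IsDiag := by
  induction m with
  | zero => exact ⟨1, so3_one_mem, fun k => k.elim0⟩
  | succ n ih =>
    obtain ⟨g, hg, hgd⟩ := ih (fun k => a k.castSucc) (fun k => ha _) (fun k l => hcomm _ _)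
    set c := gᵀ * a (Fin.last n) * g with hcdef
    have hgt : gᵀ * g = 1 := so3_transpose_mul hg
    have hcsym : cᵀ = c := by
      rw [hcdef, Matrix.transpose_mul, Matrix.transpose_mul, Matrix.transpose_transpose,
        ha, ← Matrix.mul_assoc]
    have hccomm : ∀ k : Fin n, c * (gᵀ * a k.castSucc * g) = (gᵀ * a k.castSucc * g) * c := by
      intro k
      have e1 : ∀ p q : Matrix (Fin 3) (Fin 3) ℝ,
          (gᵀ * p * g) * (gᵀ * q * g) = gᵀ * (p * q) * g := by
        intro p q
        calc (gᵀ * p * g) * (gᵀ * q * g) = gᵀ * p * (g * gᵀ) * q * g := by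
              simp only [Matrix.mul_assoc]
          _ = gᵀ * (p * q) * g := by rw [hg.1]; simp only [Matrix.mul_assoc, Matrix.one_mul]
      rw [hcdef, e1, e1, hcomm]
    obtain ⟨h, hh, hdiag, hpres⟩ := refine_step n (fun k => gᵀ * a k.castSucc * g) hgd c hcsym hccomm
    refine ⟨g * h, so3_mul_mem hg hh, fun k => ?_⟩
    have key : (g * h)ᵀ * a k * (g * h) = hᵀ * (gᵀ * a k * g) * h := by
      rw [Matrix.transpose_mul]
      simp only [Matrix.mul_assoc]
    rw [key]
    induction k using Fin.lastCases with
    | last => exact hdiag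
    | cast k => rw [hpres k]; exact hgd k

lemma mulVec_eq (g : Matrix (Fin 3) (Fin 3) ℝ) (u : Fin 3 → ℝ) (i : Fin 3) :
    (g *ᵥ u) i = g i 0 * u 0 + g i 1 * u 1 + g i 2 * u 2 := by
  simp [Matrix.mulVec, dotProduct, Fin.sum_univ_three]

lemma det3_mulVec (g : Matrix (Fin 3) (Fin 3) ℝ) (u v w : Fin 3 → ℝ) :
    det3 (g *ᵥ u) (g *ᵥ v) (g *ᵥ w) = g.det * det3 u v w := by
  rw [det3_eq, det3_eq, Matrix.det_fin_three]
  simp only [mulVec_eq]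
  ring

lemma isDiag_mul_isDiag {D E : Matrix (Fin 3) (Fin 3) ℝ} (hD : D.IsDiag) (hE : E.IsDiag) :
    (D * E).IsDiag := by
  intro i j hij
  rw [mul_isDiag_apply D E hE, hD hij, zero_mul]

lemma isDiag_comm {D E : Matrix (Fin 3) (Fin 3) ℝ} (hD : D.IsDiag) (hE : E.IsDiag) :
    D * E = E * D := by
  ext i j
  rw [mul_isDiag_apply D E hE, mul_isDiag_apply E D hD]
  by_cases hij : i = j
  · subst hij; ring
  · rw [hD hij, hE hij, zero_mul, zero_mul]

lemma det3_diag_ones (D E : Matrix (Fin 3) (Fin 3) ℝ) (hD : D.IsDiag) (hE : E.IsDiag) :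
    det3 ![1,1,1] (D *ᵥ ![1,1,1]) (E *ᵥ ![1,1,1]) =
      (D 1 1 - D 0 0) * (E 2 2 - E 0 0) - (D 2 2 - D 0 0) * (E 1 1 - E 0 0) := by
  have hv : ∀ (M : Matrix (Fin 3) (Fin 3) ℝ), M.IsDiag → ∀ i, (M *ᵥ ![1,1,1]) i = M i i := by
    intro M hM i
    rw [mulVec_eq]
    fin_cases i <;>
      simp [hM (show (0:Fin 3) ≠ 1 by decide), hM (show (0:Fin 3) ≠ 2 by decide),
        hM (show (1:Fin 3) ≠ 0 by decide), hM (show (1:Fin 3) ≠ 2 by decide),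
        hM (show (2:Fin 3) ≠ 0 by decide), hM (show (2:Fin 3) ≠ 1 by decide)]
  rw [det3_eq, hv D hD, hv D hD, hv D hD, hv E hE, hv E hE, hv E hE]
  norm_num
  simp
  ring

lemma conj_vvT (g' : Matrix (Fin 3) (Fin 3) ℝ) (w : Fin 3 → ℝ) (hw : g' *ᵥ w = w) :
    g' * (Matrix.of fun i j => w i * w j) * g'ᵀ = Matrix.of fun i j => w i * w j := by
  ext i j
  rw [mul3_apply]
  have h1 := congrFun hw i
  have h2 := congrFun hw j
  rw [mulVec_eq] at h1 h2
  simp only [Matrix.of_apply, Matrix.transpose_apply]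
  linear_combination (g' j 0 * w 0 + g' j 1 * w 1 + g' j 2 * w 2) * h1 + w i * h2

lemma conj_back (g A : Matrix (Fin 3) (Fin 3) ℝ) (hg : g ∈ SO3) :
    g * (gᵀ * A * g) * gᵀ = A := by
  have h1 : g * (gᵀ * A * g) * gᵀ = (g * gᵀ) * A * (g * gᵀ) := by
    simp only [Matrix.mul_assoc]
  rw [h1, hg.1, Matrix.one_mul, Matrix.mul_one]

lemma col_conj (g : Matrix (Fin 3) (Fin 3) ℝ) (i₀ : Fin 3) :
    g * Matrix.diagonal (Pi.single i₀ 1) * gᵀ = Matrix.of fun i j => g i i₀ * g j i₀ := by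
  ext i j
  rw [Matrix.mul_apply]
  simp only [Matrix.of_apply]
  rw [Finset.sum_eq_single i₀]
  · rw [Matrix.mul_diagonal, Matrix.transpose_apply, Pi.single_eq_same]
    ring
  · intro b _ hb
    rw [Matrix.mul_diagonal, Pi.single_eq_of_ne hb]
    ring
  · intro h; exact absurd (Finset.mem_univ i₀) h

lemma axis_case (n : ℕ) (a : Fin n → Matrix (Fin 3) (Fin 3) ℝ)
    (g : Matrix (Fin 3) (Fin 3) ℝ) (hg : g ∈ SO3) (i₀ : Fin 3)
    (hform : ∀ k, ∃ p s : ℝ, gᵀ * a k * g = p • 1 + s • Matrix.diagonal (Pi.single i₀ 1)) :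
    ∃ v : Fin 3 → ℝ, (∑ i, v i ^ 2) = 1 ∧
      ∀ g' ∈ SO3, g' *ᵥ v = v → ∀ k, g' * a k * g'ᵀ = a k := by
  refine ⟨fun i => g i i₀, ?_, ?_⟩
  · have h1 := congrFun (congrFun (so3_transpose_mul hg) i₀) i₀
    rw [Matrix.mul_apply] at h1
    rw [Fin.sum_univ_three] at h1 ⊢
    simp only [Matrix.transpose_apply, Matrix.one_apply_eq] at h1
    linear_combination h1
  · intro g' hg' hfix k
    obtain ⟨p, s, hps⟩ := hform k
    have hak : a k = p • (1 : Matrix (Fin 3) (Fin 3) ℝ)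
        + s • (Matrix.of fun i j => g i i₀ * g j i₀) := by
      have := congrArg (fun M => g * M * gᵀ) hps
      beta_reduce at this
      rw [conj_back g (a k) hg] at this
      rw [this, Matrix.mul_add, Matrix.add_mul]
      congr 1
      · rw [Matrix.mul_smul, Matrix.smul_mul, Matrix.mul_one, hg.1]
      · rw [Matrix.mul_smul, Matrix.smul_mul, col_conj]
    rw [hak]
    rw [Matrix.mul_add, Matrix.add_mul, Matrix.mul_smul, Matrix.smul_mul,
      Matrix.mul_smul, Matrix.smul_mul, Matrix.mul_one, hg'.1, conj_vvT g' _ hfix]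

lemma diag_decomp (M : Matrix (Fin 3) (Fin 3) ℝ) (hM : M.IsDiag) (i₀ : Fin 3) (q : ℝ)
    (hq : ∀ i, i ≠ i₀ → M i i = q) :
    M = q • 1 + (M i₀ i₀ - q) • Matrix.diagonal (Pi.single i₀ 1) := by
  ext i j
  rw [Matrix.add_apply, Matrix.smul_apply, Matrix.smul_apply, Matrix.one_apply,
    Matrix.diagonal_apply]
  by_cases hij : i = j
  · subst hij
    rw [if_pos rfl, if_pos rfl]
    by_cases hii0 : i = i₀
    · subst hii0
      rw [Pi.single_eq_same]
      simp only [smul_eq_mul, mul_one]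
      ring
    · rw [hq i hii0, Pi.single_eq_of_ne hii0]
      simp
  · rw [hM hij, if_neg hij, if_neg hij]
    simp

lemma degenerate_axis (n : ℕ) (a : Fin n → Matrix (Fin 3) (Fin 3) ℝ)
    (g : Matrix (Fin 3) (Fin 3) ℝ) (hg : g ∈ SO3)
    (hbd : ∀ k, (gᵀ * a k * g).IsDiag)
    (hdeg1 : ∀ j x, det3 x ((a j) *ᵥ x) ((a j * a j) *ᵥ x) = 0)
    (hdeg2 : ∀ i j x, det3 x ((a i) *ᵥ x) ((a j) *ᵥ x) = 0) :
    ∃ v : Fin 3 → ℝ, (∑ i, v i ^ 2) = 1 ∧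
      ∀ g' ∈ SO3, g' *ᵥ v = v → ∀ k, g' * a k * g'ᵀ = a k := by
  set b : Fin n → Matrix (Fin 3) (Fin 3) ℝ := fun k => gᵀ * a k * g with hbdef
  have hgb : ∀ k, g * b k = a k * g := by
    intro k
    have : g * (gᵀ * a k * g) = (g * gᵀ) * (a k * g) := by simp only [Matrix.mul_assoc]
    rw [hbdef, this, hg.1, Matrix.one_mul]
  set y : Fin 3 → ℝ := ![1,1,1] with hydef
  have hxa : ∀ k, (a k) *ᵥ (g *ᵥ y) = g *ᵥ (b k *ᵥ y) := by
    intro k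
    rw [Matrix.mulVec_mulVec, Matrix.mulVec_mulVec, hgb k]
  have hxaa : ∀ k, (a k * a k) *ᵥ (g *ᵥ y) = g *ᵥ ((b k * b k) *ᵥ y) := by
    intro k
    rw [Matrix.mulVec_mulVec, Matrix.mulVec_mulVec]
    have hcalc : (a k * a k) * g = g * (b k * b k) :=
      calc (a k * a k) * g = a k * (g * b k) := by rw [hgb k, Matrix.mul_assoc]
        _ = (g * b k) * b k := by rw [← Matrix.mul_assoc, hgb k]
        _ = g * (b k * b k) := by rw [Matrix.mul_assoc]
    rw [hcalc]
  have V2 : ∀ k l, det3 y (b k *ᵥ y) (b l *ᵥ y) = 0 := by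
    intro k l
    have h := hdeg2 k l (g *ᵥ y)
    rw [hxa k, hxa l, det3_mulVec, hg.2, one_mul] at h
    exact h
  have V1 : ∀ k, det3 y (b k *ᵥ y) ((b k * b k) *ᵥ y) = 0 := by
    intro k
    have h := hdeg1 k (g *ᵥ y)
    rw [hxa k, hxaa k, det3_mulVec, hg.2, one_mul] at h
    exact h
  have W2 : ∀ k l, (b k 1 1 - b k 0 0) * (b l 2 2 - b l 0 0)
      - (b k 2 2 - b k 0 0) * (b l 1 1 - b l 0 0) = 0 := by
    intro k l
    have h := V2 k l
    rwa [det3_diag_ones _ _ (hbd k) (hbd l)] at h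
  have W1 : ∀ k, (b k 1 1 - b k 0 0) * ((b k 2 2) - b k 0 0) * (b k 2 2 - b k 1 1) = 0 := by
    intro k
    have h := V1 k
    rw [det3_diag_ones _ _ (hbd k) (isDiag_mul_isDiag (hbd k) (hbd k))] at h
    have e0 : (b k * b k) 0 0 = b k 0 0 * b k 0 0 := mul_isDiag_apply _ _ (hbd k) 0 0
    have e1 : (b k * b k) 1 1 = b k 1 1 * b k 1 1 := mul_isDiag_apply _ _ (hbd k) 1 1
    have e2 : (b k * b k) 2 2 = b k 2 2 * b k 2 2 := mul_isDiag_apply _ _ (hbd k) 2 2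
    rw [e0, e1, e2] at h
    linear_combination h
  by_cases hsc : ∀ k, b k 0 0 = b k 1 1 ∧ b k 0 0 = b k 2 2
  · apply axis_case n a g hg 0
    intro k
    refine ⟨b k 1 1, b k 0 0 - b k 1 1, ?_⟩
    refine diag_decomp (b k) (hbd k) 0 (b k 1 1) ?_
    intro i hi
    fin_cases i
    · exact absurd rfl hi
    · rfl
    · exact show b k 2 2 = b k 1 1 by rw [← (hsc k).2, (hsc k).1]
  · push_neg at hsc
    obtain ⟨k₀, hk₀⟩ := hsc
    by_cases hb01 : b k₀ 0 0 = b k₀ 1 1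
    · -- pair {0,1}, axis 2
      have hb02 : b k₀ 0 0 ≠ b k₀ 2 2 := hk₀ hb01
      have hall : ∀ k, b k 1 1 = b k 0 0 := by
        intro k
        have h := W2 k₀ k
        have h2 : (b k₀ 2 2 - b k₀ 0 0) * (b k 1 1 - b k 0 0) = 0 := by
          linear_combination -h - (b k 2 2 - b k 0 0) * hb01
        rcases mul_eq_zero.mp h2 with h3 | h3
        · exact absurd (by linarith) hb02
        · linarith
      apply axis_case n a g hg 2
      intro k
      refine ⟨b k 0 0, b k 2 2 - b k 0 0, ?_⟩
      refine diag_decomp (b k) (hbd k) 2 (b k 0 0) ?_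
      intro i hi
      fin_cases i
      · rfl
      · exact show b k 1 1 = b k 0 0 from hall k
      · exact absurd rfl hi
    · by_cases hb02 : b k₀ 0 0 = b k₀ 2 2
      · -- pair {0,2}, axis 1
        have hall : ∀ k, b k 2 2 = b k 0 0 := by
          intro k
          have h := W2 k₀ k
          have h2 : (b k₀ 1 1 - b k₀ 0 0) * (b k 2 2 - b k 0 0) = 0 := by
            linear_combination h - (b k 1 1 - b k 0 0) * hb02
          rcases mul_eq_zero.mp h2 with h3 | h3
          · exact absurd (by linarith) hb01
          · linarith
        apply axis_case n a g hg 1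
        intro k
        refine ⟨b k 0 0, b k 1 1 - b k 0 0, ?_⟩
        refine diag_decomp (b k) (hbd k) 1 (b k 0 0) ?_
        intro i hi
        fin_cases i
        · rfl
        · exact absurd rfl hi
        · exact show b k 2 2 = b k 0 0 from hall k
      · -- pair {1,2}, axis 0
        have hb12 : b k₀ 1 1 = b k₀ 2 2 := by
          have h := W1 k₀
          rcases mul_eq_zero.mp h with h2 | h2
          · rcases mul_eq_zero.mp h2 with h3 | h3
            · exact absurd (by linarith) (Ne.symm hb01)
            · exact absurd (by linarith) (Ne.symm hb02)
          · linarith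
        have hall : ∀ k, b k 2 2 = b k 1 1 := by
          intro k
          have h := W2 k₀ k
          have h2 : (b k₀ 1 1 - b k₀ 0 0) * (b k 2 2 - b k 1 1) = 0 := by
            linear_combination h + (b k 0 0 - b k 1 1) * hb12
          rcases mul_eq_zero.mp h2 with h3 | h3
          · exact absurd (by linarith) (Ne.symm hb01)
          · linarith
        apply axis_case n a g hg 0
        intro k
        refine ⟨b k 1 1, b k 0 0 - b k 1 1, ?_⟩
        refine diag_decomp (b k) (hbd k) 0 (b k 1 1) ?_
        intro i hi
        fin_cases i
        · exact absurd rfl hi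
        · rfl
        · exact show b k 2 2 = b k 1 1 from hall k

lemma comm_of_inv (g A : Matrix (Fin 3) (Fin 3) ℝ) (hg : g ∈ SO3)
    (h : g * A * gᵀ = A) : A * g = g * A := by
  have h1 := congrArg (fun M => M * g) h
  beta_reduce at h1
  rw [Matrix.mul_assoc (g * A) gᵀ g, so3_transpose_mul hg, Matrix.mul_one] at h1
  exact h1.symm

set_option maxHeartbeats 1000000 in
lemma axis_form (v : Fin 3 → ℝ) (hunit : v 0 ^ 2 + v 1 ^ 2 + v 2 ^ 2 = 1)
    (A : Matrix (Fin 3) (Fin 3) ℝ) (hA : Aᵀ = A)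
    (hinv : ∀ g ∈ SO3, g *ᵥ v = v → g * A * gᵀ = A) :
    ∃ p s : ℝ, A = p • 1 + s • Matrix.of (fun i j => v i * v j) := by
  have PN : ∀ z : ℝ, v 0 ^ 2 * z + v 1 ^ 2 * z + v 2 ^ 2 * z = z := fun z => by
    have : (v 0 ^ 2 + v 1 ^ 2 + v 2 ^ 2) * z = 1 * z := by rw [hunit]
    linarith [this]
  set W : Matrix (Fin 3) (Fin 3) ℝ := Matrix.of (fun i j => v i * v j) with hWdef
  set K : Matrix (Fin 3) (Fin 3) ℝ :=
    !![0, -v 2, v 1; v 2, 0, -v 0; -v 1, v 0, 0] with hKdef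
  have hWT : Wᵀ = W := by
    ext i j; rw [Matrix.transpose_apply]; simp only [hWdef, Matrix.of_apply]; ring
  have hKT : Kᵀ = -K := by
    ext i j; fin_cases i <;> fin_cases j <;> simp [hKdef]
  -- R1 = 2W - 1 is in SO3 and fixes v
  have hR1mem : (2:ℝ) • W - 1 ∈ SO3 := by
    constructor
    · rw [Matrix.transpose_sub, Matrix.transpose_smul, hWT, Matrix.transpose_one]
      ext i j
      fin_cases i <;> fin_cases j <;>
        simp [Matrix.mul_apply, Fin.sum_univ_three, Matrix.sub_apply, Matrix.smul_apply,
          Matrix.one_apply, hWdef, Matrix.vecHead, Matrix.vecTail] <;>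
        linarith [PN (v 0 * v 0), PN (v 0 * v 1), PN (v 0 * v 2), PN (v 1 * v 1),
          PN (v 1 * v 2), PN (v 2 * v 2)]
    · rw [Matrix.det_fin_three]
      simp [Matrix.sub_apply, Matrix.smul_apply, Matrix.one_apply, hWdef, Fin.ext_iff]
      linarith [hunit, PN (v 0 ^ 2), PN (v 1 ^ 2), PN (v 2 ^ 2)]
  have hR1v : ((2:ℝ) • W - 1) *ᵥ v = v := by
    funext i
    rw [mulVec_eq]
    fin_cases i <;>
      simp [Matrix.sub_apply, Matrix.smul_apply, Matrix.one_apply, hWdef, Fin.ext_iff] <;>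
      linarith [PN (v 0), PN (v 1), PN (v 2)]
  have hR2mem : W + K ∈ SO3 := by
    constructor
    · ext i j
      fin_cases i <;> fin_cases j <;>
        simp [Matrix.mul_apply, Fin.sum_univ_three, Matrix.add_apply, Matrix.transpose_apply,
          Matrix.one_apply, hWdef, hKdef, Fin.ext_iff, Matrix.vecHead, Matrix.vecTail] <;>
        linarith [PN (v 0 * v 0), PN (v 0 * v 1), PN (v 0 * v 2), PN (v 1 * v 1),
          PN (v 1 * v 2), PN (v 2 * v 2), PN (v 0), PN (v 1), PN (v 2)]
    · rw [Matrix.det_fin_three]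
      simp [Matrix.add_apply, hWdef, hKdef, Fin.ext_iff]
      linarith [hunit, PN (v 0 ^ 2), PN (v 1 ^ 2), PN (v 2 ^ 2)]
  have hR2v : (W + K) *ᵥ v = v := by
    funext i
    rw [mulVec_eq]
    fin_cases i <;>
      simp [Matrix.add_apply, hWdef, hKdef, Fin.ext_iff] <;>
      linarith [PN (v 0), PN (v 1), PN (v 2)]
  have commR1 : A * ((2:ℝ) • W - 1) = ((2:ℝ) • W - 1) * A :=
    comm_of_inv _ A hR1mem (hinv _ hR1mem hR1v)
  have commR2 : A * (W + K) = (W + K) * A :=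
    comm_of_inv _ A hR2mem (hinv _ hR2mem hR2v)
  have commW : A * W = W * A := by
    have h2 : (2:ℝ) • (A * W) = (2:ℝ) • (W * A) := by
      have h1 := commR1
      rw [Matrix.mul_sub, Matrix.sub_mul, Matrix.mul_one, Matrix.one_mul,
        Matrix.mul_smul, Matrix.smul_mul] at h1
      exact sub_left_inj.mp h1
    exact smul_right_injective _ (two_ne_zero) h2
  have commK : A * K = K * A := by
    have h1 := commR2
    rw [Matrix.mul_add, Matrix.add_mul, commW] at h1
    exact add_left_cancel h1
  -- A v = mu v
  have Rel : ∀ i j, (A *ᵥ v) i * v j = v i * ((A *ᵥ v) j) := by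
    intro i j
    have h := congrFun (congrFun commW i) j
    rw [Matrix.mul_apply, Matrix.mul_apply, Fin.sum_univ_three, Fin.sum_univ_three] at h
    simp only [hWdef, Matrix.of_apply] at h
    rw [transpose_entry A hA 0 j, transpose_entry A hA 1 j, transpose_entry A hA 2 j] at h
    rw [mulVec_eq, mulVec_eq]
    linear_combination h
  set μ : ℝ := v 0 * (A *ᵥ v) 0 + v 1 * (A *ᵥ v) 1 + v 2 * (A *ᵥ v) 2 with hμdef
  have hAv : ∀ i, (A *ᵥ v) i = μ * v i := by
    intro i
    have e := PN ((A *ᵥ v) i)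
    have r0 := Rel i 0
    have r1 := Rel i 1
    have r2 := Rel i 2
    rw [hμdef]
    linear_combination -e + v 0 * r0 + v 1 * r1 + v 2 * r2
  set B : Matrix (Fin 3) (Fin 3) ℝ := A - μ • W with hBdef
  have hBsym : Bᵀ = B := by
    rw [hBdef, Matrix.transpose_sub, Matrix.transpose_smul, hWT, hA]
  have hBv : B *ᵥ v = 0 := by
    funext i
    rw [hBdef, Matrix.sub_mulVec, Matrix.smul_mulVec]
    have h1 := hAv i
    have h2 : (W *ᵥ v) i = v i := by
      rw [mulVec_eq]
      simp only [hWdef, Matrix.of_apply]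
      linarith [PN (v i)]
    simp only [Pi.sub_apply, Pi.smul_apply, Pi.zero_apply, smul_eq_mul, h1, h2]
    ring
  have hBW : B * W = 0 := by
    ext i j
    rw [Matrix.mul_apply, Fin.sum_univ_three]
    have h1 := congrFun hBv i
    rw [mulVec_eq] at h1
    simp only [hWdef, Matrix.of_apply, Pi.zero_apply, Matrix.zero_apply] at h1 ⊢
    linear_combination v j * h1
  have hKv : K *ᵥ v = 0 := by
    funext i
    rw [mulVec_eq]
    fin_cases i <;> simp [hKdef] <;> ring
  have hWK : W * K = 0 := by
    ext i j
    rw [Matrix.mul_apply, Fin.sum_univ_three]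
    fin_cases j <;>
      simp [hWdef, hKdef] <;> ring
  have hKW : K * W = 0 := by
    ext i j
    rw [Matrix.mul_apply, Fin.sum_univ_three]
    fin_cases i <;>
      simp [hWdef, hKdef] <;> ring
  have hBK : B * K = K * B := by
    rw [hBdef, sub_mul, mul_sub, Matrix.smul_mul, Matrix.mul_smul,
      hWK, hKW, smul_zero, sub_zero, sub_zero, commK]
  set C : Matrix (Fin 3) (Fin 3) ℝ := B * K with hCdef
  have hCT : Cᵀ = -C := by
    rw [hCdef, Matrix.transpose_mul, hKT, hBsym, Matrix.neg_mul, ← hBK]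
  have hCv : C *ᵥ v = 0 := by
    rw [hCdef, ← Matrix.mulVec_mulVec, hKv, Matrix.mulVec_zero]
  have hanti : ∀ i j : Fin 3, C j i = - C i j := by
    intro i j
    have h := congrFun (congrFun hCT i) j
    rw [Matrix.transpose_apply, Matrix.neg_apply] at h
    exact h
  set t : ℝ := C 2 1 * v 0 + C 0 2 * v 1 + C 1 0 * v 2 with htdef
  -- cross relations from C v = 0
  have cv0 := congrFun hCv 0
  have cv1 := congrFun hCv 1
  have cv2 := congrFun hCv 2
  rw [mulVec_eq] at cv0 cv1 cv2
  simp only [Pi.zero_apply] at cv0 cv1 cv2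
  have c00 : C 0 0 = 0 := by have := hanti 0 0; linarith
  have c11 : C 1 1 = 0 := by have := hanti 1 1; linarith
  have c22 : C 2 2 = 0 := by have := hanti 2 2; linarith
  have c01 : C 0 1 = - C 1 0 := by have := hanti 1 0; linarith
  have c12 : C 1 2 = - C 2 1 := by have := hanti 2 1; linarith
  have c20 : C 2 0 = - C 0 2 := by have := hanti 0 2; linarith
  rw [c00, c01] at cv0
  rw [c11, c12] at cv1
  rw [c22, c20] at cv2
  -- cv0 : -C 1 0 * v 1 + C 0 2 * v 2 = 0 (plus zero terms)
  have hu0 : C 2 1 = t * v 0 := by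
    rw [htdef]
    linear_combination (-(C 2 1)) * hunit - v 2 * cv1 + v 1 * cv2
  have hu1 : C 0 2 = t * v 1 := by
    rw [htdef]
    linear_combination (-(C 0 2)) * hunit + v 2 * cv0 - v 0 * cv2
  have hu2 : C 1 0 = t * v 2 := by
    rw [htdef]
    linear_combination (-(C 1 0)) * hunit - v 1 * cv0 + v 0 * cv1
  have hC : C = t • K := by
    ext i j
    fin_cases i <;> fin_cases j <;>
      simp [hKdef, Matrix.smul_apply] <;>
      first
        | exact c00
        | exact c11
        | exact c22
        | linarith [hu0, hu1, hu2, c01, c12, c20]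
  have hKK : K * K = W - 1 := by
    ext i j
    fin_cases i <;> fin_cases j <;>
      simp [Matrix.mul_apply, Fin.sum_univ_three, hKdef, hWdef, Matrix.sub_apply,
        Matrix.one_apply, Fin.ext_iff, Matrix.vecHead, Matrix.vecTail] <;>
      linarith [hunit]
  have hBKK : B * (K * K) = t • (K * K) := by
    rw [← Matrix.mul_assoc, ← hCdef, hC, Matrix.smul_mul]
  rw [hKK] at hBKK
  rw [Matrix.mul_sub, hBW, Matrix.mul_one, zero_sub] at hBKK
  -- hBKK : -B = t • (W - 1)
  refine ⟨t, μ - t, ?_⟩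
  have hBform : B = t • (1 : Matrix (Fin 3) (Fin 3) ℝ) - t • W := by
    have := congrArg (fun M => -M) hBKK
    simp only [neg_neg] at this
    rw [this, smul_sub]
    abel
  have : A = B + μ • W := by rw [hBdef]; abel
  rw [this, hBform, sub_smul]
  abel

lemma form_mulVec (A : Matrix (Fin 3) (Fin 3) ℝ) (v : Fin 3 → ℝ) (p s : ℝ)
    (h : A = p • 1 + s • Matrix.of (fun i j => v i * v j)) (x : Fin 3 → ℝ) :
    ∀ i, (A *ᵥ x) i = p * x i + (s * (v 0 * x 0 + v 1 * x 1 + v 2 * x 2)) * v i := by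
  intro i
  rw [mulVec_eq, h]
  simp only [Matrix.add_apply, Matrix.smul_apply, Matrix.one_apply, Matrix.of_apply,
    smul_eq_mul]
  fin_cases i <;> simp [Fin.ext_iff] <;> ring

lemma det3_span (x v y z : Fin 3 → ℝ) (p c q d : ℝ)
    (hy : ∀ i, y i = p * x i + c * v i) (hz : ∀ i, z i = q * x i + d * v i) :
    det3 x y z = 0 := by
  rw [det3_eq, hy 0, hy 1, hy 2, hz 0, hz 1, hz 2]
  ring

/-- An `n`-tuple `(a₁, …, aₙ)` of real symmetric `3 × 3` matrices is
orthotropic (simultaneously diagonalizable by a rotation, but not at least transversely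
isotropic) iff all the `aₖ` pairwise commute and in addition some `aⱼ × aⱼ² ≠ 0` or some
`aᵢ × aⱼ ≠ 0`. -/
theorem family_orthotropic_iff
    (n : ℕ) (a : Fin n → Matrix (Fin 3) (Fin 3) ℝ) (ha : ∀ k, (a k)ᵀ = a k) :
    ((∃ g ∈ SO3, ∀ k, (gᵀ * a k * g).IsDiag) ∧
      ¬ ∃ v : Fin 3 → ℝ, (∑ i, v i ^ 2) = 1 ∧
        ∀ g ∈ SO3, g.mulVec v = v → ∀ k, g * a k * gᵀ = a k) ↔
    ((∀ k l, a k * a l = a l * a k) ∧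
      ((∃ j, ∃ x : Fin 3 → ℝ, det3 x ((a j).mulVec x) ((a j * a j).mulVec x) ≠ 0) ∨
       (∃ i j, ∃ x : Fin 3 → ℝ, det3 x ((a i).mulVec x) ((a j).mulVec x) ≠ 0))) := by
  constructor
  · rintro ⟨⟨g, hg, hdiag⟩, hB⟩
    have e : ∀ k, a k = g * (gᵀ * a k * g) * gᵀ := fun k => (conj_back g (a k) hg).symm
    have comm' : ∀ X Y : Matrix (Fin 3) (Fin 3) ℝ,
        (g * X * gᵀ) * (g * Y * gᵀ) = g * (X * Y) * gᵀ := by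
      intro X Y
      have h1 : (g * X * gᵀ) * (g * Y * gᵀ) = g * X * (gᵀ * g) * Y * gᵀ := by
        simp only [Matrix.mul_assoc]
      rw [h1, so3_transpose_mul hg, Matrix.mul_one, Matrix.mul_assoc g X Y]
    constructor
    · intro k l
      conv_lhs => rw [e k, e l]
      conv_rhs => rw [e k, e l]
      rw [comm', comm', isDiag_comm (hdiag k) (hdiag l)]
    · by_contra hd
      push_neg at hd
      obtain ⟨hd1, hd2⟩ := hd
      exact hB (degenerate_axis n a g hg hdiag hd1 hd2)
  · rintro ⟨hcomm, hnd⟩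
    obtain ⟨g, hg, hd⟩ := sim_diag n a ha hcomm
    refine ⟨⟨g, hg, hd⟩, ?_⟩
    rintro ⟨v, hv1, hv2⟩
    have hunit : v 0 ^ 2 + v 1 ^ 2 + v 2 ^ 2 = 1 := by
      rw [Fin.sum_univ_three] at hv1; exact hv1
    have hforms : ∀ k, ∃ p s : ℝ, a k = p • 1 + s • Matrix.of (fun i j => v i * v j) :=
      fun k => axis_form v hunit (a k) (ha k) (fun g' hg' hfix => hv2 g' hg' hfix k)
    rcases hnd with ⟨j, x, hne⟩ | ⟨i, j, x, hne⟩
    · obtain ⟨p, s, hf⟩ := hforms j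
      apply hne
      have hy := form_mulVec (a j) v p s hf x
      have hz0 := form_mulVec (a j) v p s hf ((a j) *ᵥ x)
      have hzz : ∀ i', ((a j * a j) *ᵥ x) i'
          = (p * p) * x i' + (p * (s * (v 0 * x 0 + v 1 * x 1 + v 2 * x 2))
            + s * (v 0 * ((a j) *ᵥ x) 0 + v 1 * ((a j) *ᵥ x) 1 + v 2 * ((a j) *ᵥ x) 2)) * v i' := by
        intro i'
        rw [← Matrix.mulVec_mulVec, hz0 i', hy i']
        ring
      exact det3_span x v _ _ p (s * (v 0 * x 0 + v 1 * x 1 + v 2 * x 2)) (p * p) _ hy hzz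
    · obtain ⟨p, s, hf⟩ := hforms i
      obtain ⟨q, r, hf'⟩ := hforms j
      apply hne
      exact det3_span x v _ _ p (s * (v 0 * x 0 + v 1 * x 1 + v 2 * x 2))
        q (r * (v 0 * x 0 + v 1 * x 1 + v 2 * x 2))
        (form_mulVec (a i) v p s hf x) (form_mulVec (a j) v q r hf' x)
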